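/- For every real α∈(0,1), every integer J≥1, and every real V̂∈(0,1), the function p₀ ↦ 1 − (1 − α^{J}·[1−(1−α)·(1−p₀)])·(1−V̂) / ((J+1−p₀)·(1−α)) is strictly decreasing on [0,1]. -/
import Mathlib

lemma key_geom (alpha : ℝ) (h0 : 0 < alpha) (h1 : alpha < 1) :
    ∀ J : ℕ, 1 ≤ J → ((J : ℝ) + 1) * alpha ^ J * (1 - alpha) < 1 - alpha ^ (J + 1) := by
  intro J hJ
  induction J with
  | zero => omega
  | succ n ih =>
    rcases Nat.eq_or_lt_of_le hJ with h | h
    · have : n = 0 := by omega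
      subst this
      simp only [pow_succ, pow_zero, one_mul]
      push_cast
      nlinarith [sq_nonneg (1 - alpha)]
    · have hn : 1 ≤ n := by omega
      have ihn := ih hn
      have hpow : 0 < alpha ^ n := pow_pos h0 n
      have hlt : alpha ^ n < 1 := pow_lt_one₀ (le_of_lt h0) h1 (by omega)
      simp only [pow_succ] at *
      push_cast at *
      have haa : alpha ^ n * alpha < 1 := by nlinarith
      nlinarith [mul_lt_mul_of_pos_left ihn h0,
        mul_lt_mul_of_pos_right haa (sub_pos.mpr h1)]

/-- the average long-term MSE of the myopic policy at the
boundary multiplier, as a function of the randomization probability `p₀`, is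
strictly decreasing on `[0,1]`. -/
theorem stmt_12 (alpha Vh : ℝ) (halpha : alpha ∈ Set.Ioo (0 : ℝ) 1)
    (J : ℕ) (hJ : 1 ≤ J) (hVh : Vh ∈ Set.Ioo (0 : ℝ) 1) :
    StrictAntiOn
      (fun p0 : ℝ =>
        1 - (1 - alpha ^ J * (1 - (1 - alpha) * (1 - p0))) * (1 - Vh) /
          (((J : ℝ) + 1 - p0) * (1 - alpha)))
      (Set.Icc 0 1) := by
  obtain ⟨ha0, ha1⟩ := halpha
  obtain ⟨hV0, hV1⟩ := hVh
  have hJ1 : (1 : ℝ) ≤ (J : ℝ) := by exact_mod_cast hJ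
  intro x hx y hy hxy
  simp only [Set.mem_Icc] at hx hy
  have hDx : 0 < ((J : ℝ) + 1 - x) * (1 - alpha) := by nlinarith [hx.2]
  have hDy : 0 < ((J : ℝ) + 1 - y) * (1 - alpha) := by nlinarith [hy.2]
  have key := key_geom alpha ha0 ha1 J hJ
  rw [pow_succ] at key
  have hmain : 0 < (1 - Vh) * (1 - alpha) * (y - x) *
      ((1 - alpha ^ J * alpha) - ((J : ℝ) + 1) * alpha ^ J * (1 - alpha)) := by
    apply mul_pos
    apply mul_pos
    apply mul_pos
    · linarith
    · linarith
    · linarith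
    · linarith
  simp only
  have h : (1 - alpha ^ J * (1 - (1 - alpha) * (1 - x))) * (1 - Vh) /
        (((J : ℝ) + 1 - x) * (1 - alpha)) <
      (1 - alpha ^ J * (1 - (1 - alpha) * (1 - y))) * (1 - Vh) /
        (((J : ℝ) + 1 - y) * (1 - alpha)) := by
    rw [div_lt_div_iff₀ hDx hDy]
    nlinarith [hmain]
  linarith
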